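/- The coefficients c_n of the compositional inverse G(X) = Σ c_n X^n of the Prouhet–Thue–Morse series over F_2 satisfy c_0 = 0, c_1 = c_2 = 1, c_3 = 0, and for n ≥ 1: c_{4n} = c_{4n+1} = c_{4n+2} = c_{4n-1} and c_{4n+3} = c_{4n-1} + c_n (in F_2). -/

import Mathlib

open PowerSeries Finset

namespace PTMInv

lemma two_z : (2 : ZMod 2) = 0 := by decide
lemma addself : ∀ x : ZMod 2, x + x = 0 := by decide
lemma mulself : ∀ x : ZMod 2, x * x = x := by decide

/-- coefficient of odd index in a square over `ZMod 2` vanishes -/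
lemma coeff_sq_odd (A : PowerSeries (ZMod 2)) (m : ℕ) :
    coeff (2 * m + 1) (A ^ 2) = 0 := by
  rw [sq, PowerSeries.coeff_mul]
  apply Finset.sum_involution (g := fun p _ => Prod.swap p)
  · intro p hp
    simp only [Prod.fst_swap, Prod.snd_swap]
    rw [mul_comm]
    exact addself _
  · intro p hp hne heq
    have h1 : p.1 = p.2 := by
      have := congrArg Prod.fst heq
      simpa using this.symm
    have h2 := Finset.HasAntidiagonal.mem_antidiagonal.mp hp
    omega
  · intro p hp
    rw [Finset.HasAntidiagonal.mem_antidiagonal] at hp ⊢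
    simpa [add_comm] using hp
  · intro p hp
    simp

/-- coefficient of even index in a square over `ZMod 2` -/
lemma coeff_sq_even (A : PowerSeries (ZMod 2)) (m : ℕ) :
    coeff (2 * m) (A ^ 2) = coeff m A := by
  rw [sq, PowerSeries.coeff_mul]
  have hmem : ((m, m) : ℕ × ℕ) ∈ Finset.HasAntidiagonal.antidiagonal (2 * m) := by
    rw [Finset.HasAntidiagonal.mem_antidiagonal]; omega
  rw [← Finset.add_sum_erase _ _ hmem]
  have hzero : ∑ p ∈ (Finset.HasAntidiagonal.antidiagonal (2 * m)).erase (m, m),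
      coeff p.1 A * coeff p.2 A = 0 := by
    apply Finset.sum_involution (g := fun p _ => Prod.swap p)
    · intro p hp
      simp only [Prod.fst_swap, Prod.snd_swap]
      rw [mul_comm]
      exact addself _
    · intro p hp hne heq
      have := Finset.mem_of_mem_erase hp
      rw [Finset.HasAntidiagonal.mem_antidiagonal] at this
      have h1 : p.1 = p.2 := by
        have := congrArg Prod.fst heq
        simpa using this.symm
      have hne' := Finset.ne_of_mem_erase hp
      apply hne'
      have : p.1 = m := by omega
      have h2 : p.2 = m := by omega
      rw [Prod.ext_iff]
      exact ⟨this, h2⟩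
    · intro p hp
      have hmem' := Finset.mem_of_mem_erase hp
      have hne' := Finset.ne_of_mem_erase hp
      rw [Finset.HasAntidiagonal.mem_antidiagonal] at hmem'
      apply Finset.mem_erase_of_ne_of_mem
      · intro heq
        apply hne'
        have h1 : p.2 = m := by have := congrArg Prod.fst heq; simpa using this
        have h2 : p.1 = m := by have := congrArg Prod.snd heq; simpa using this
        rw [Prod.ext_iff]; exact ⟨h2, h1⟩
      · rw [Finset.HasAntidiagonal.mem_antidiagonal, Prod.fst_swap, Prod.snd_swap]; omega
    · intro p hp; simp
  rw [hzero, add_zero, mulself]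

section Subst

variable (G : PowerSeries (ZMod 2))

/-- ad hoc substitution of `G` into a power series -/
noncomputable def S (A : PowerSeries (ZMod 2)) : PowerSeries (ZMod 2) :=
  PowerSeries.mk fun k =>
    ∑ n ∈ Finset.range (k + 1), coeff n A * coeff k (G ^ n)

lemma S_coeff (A : PowerSeries (ZMod 2)) (k : ℕ) :
    coeff k (S G A) =
      ∑ n ∈ Finset.range (k + 1), coeff n A * coeff k (G ^ n) :=
  coeff_mk _ _

lemma coeff_pow_zero (hG0 : constantCoeff G = 0) (n k : ℕ) (h : k < n) : coeff k (G ^ n) = 0 := by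
  have hX : (X : PowerSeries (ZMod 2)) ∣ G := X_dvd_iff.mpr hG0
  have h2 : (X : PowerSeries (ZMod 2)) ^ n ∣ G ^ n := pow_dvd_pow_of_dvd hX n
  exact X_pow_dvd_iff.mp h2 k h

lemma coeff_eval₂ (hG0 : constantCoeff G = 0) (P : Polynomial (ZMod 2)) (k : ℕ) :
    coeff k (Polynomial.eval₂ C G P) =
      ∑ n ∈ Finset.range (k + 1), P.coeff n * coeff k (G ^ n) := by
  set N := max (P.natDegree + 1) (k + 1) with hN
  have hdeg : P.natDegree < N := lt_of_lt_of_le (Nat.lt_succ_self _) (le_max_left _ _)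
  rw [Polynomial.eval₂_eq_sum_range' C hdeg G, map_sum]
  have : ∀ i ∈ Finset.range N,
      coeff k (C (P.coeff i) * G ^ i) = P.coeff i * coeff k (G ^ i) :=
    fun i _ => coeff_C_mul _ _ _
  rw [Finset.sum_congr rfl this]
  symm
  apply Finset.sum_subset
  · exact Finset.range_subset_range.mpr (le_max_right _ _)
  · intro i _ hi
    rw [Finset.mem_range, not_lt] at hi
    rw [coeff_pow_zero G hG0 i k (by omega), mul_zero]

lemma coeff_S (hG0 : constantCoeff G = 0) (A : PowerSeries (ZMod 2)) {N k : ℕ} (h : k < N) :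
    coeff k (S G A) =
      coeff k (Polynomial.eval₂ C G (trunc N A)) := by
  rw [S_coeff, coeff_eval₂ G hG0]
  apply Finset.sum_congr rfl
  intro n hn
  rw [Finset.mem_range] at hn
  rw [coeff_trunc, if_pos (by omega)]

lemma S_add (A B : PowerSeries (ZMod 2)) : S G (A + B) = S G A + S G B := by
  apply PowerSeries.ext; intro k
  rw [map_add, S_coeff, S_coeff, S_coeff, ← Finset.sum_add_distrib]
  apply Finset.sum_congr rfl
  intro n _
  rw [map_add, add_mul]

lemma S_mul (hG0 : constantCoeff G = 0) (A B : PowerSeries (ZMod 2)) : S G (A * B) = S G A * S G B := by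
  apply PowerSeries.ext; intro k
  rw [coeff_S G hG0 (A * B) (Nat.lt_succ_self k)]
  have hpoly : ∀ n ∈ Finset.range (k + 1),
      (trunc (k + 1) (A * B)).coeff n * coeff k (G ^ n) =
      (trunc (k + 1) A * trunc (k + 1) B).coeff n * coeff k (G ^ n) := by
    intro n hn
    rw [Finset.mem_range] at hn
    congr 1
    rw [coeff_trunc, if_pos hn, Polynomial.coeff_mul, PowerSeries.coeff_mul]
    apply Finset.sum_congr rfl
    intro p hp
    rw [Finset.HasAntidiagonal.mem_antidiagonal] at hp
    rw [coeff_trunc, coeff_trunc, if_pos (by omega), if_pos (by omega)]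
  rw [coeff_eval₂ G hG0, Finset.sum_congr rfl hpoly, ← coeff_eval₂ G hG0,
    Polynomial.eval₂_mul, PowerSeries.coeff_mul, PowerSeries.coeff_mul]
  apply Finset.sum_congr rfl
  intro p hp
  rw [Finset.HasAntidiagonal.mem_antidiagonal] at hp
  rw [coeff_S G hG0 A (show p.1 < k + 1 by omega), coeff_S G hG0 B (show p.2 < k + 1 by omega)]

lemma S_one : S G 1 = 1 := by
  apply PowerSeries.ext; intro k
  rw [S_coeff]
  rw [Finset.sum_eq_single 0]
  · rw [pow_zero, coeff_one, if_pos rfl, one_mul]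
  · intro b _ hb
    rw [coeff_one, if_neg hb, zero_mul]
  · intro h
    exact absurd (Finset.mem_range.mpr (Nat.succ_pos k)) h

lemma S_X (hG0 : constantCoeff G = 0) : S G X = G := by
  apply PowerSeries.ext; intro k
  rw [S_coeff]
  rw [Finset.sum_eq_single 1]
  · rw [coeff_X, if_pos rfl, pow_one, one_mul]
  · intro b _ hb
    rw [coeff_X, if_neg hb, zero_mul]
  · intro h
    rw [Finset.mem_range, not_lt] at h
    have hk : k = 0 := by omega
    subst hk
    rw [coeff_X, if_pos rfl, pow_one, one_mul, coeff_zero_eq_constantCoeff, hG0]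

lemma S_pow (hG0 : constantCoeff G = 0) (A : PowerSeries (ZMod 2)) (n : ℕ) : S G (A ^ n) = (S G A) ^ n := by
  induction n with
  | zero => rw [pow_zero, pow_zero]; exact S_one G
  | succ n ih => rw [pow_succ, pow_succ, S_mul G hG0, ih]

end Subst

end PTMInv


section Main

open PTMInv

private lemma ptm_identity (t : ℕ → ZMod 2) (h0 : t 0 = 0)
    (he : ∀ n, t (2 * n) = t n) (ho : ∀ n, t (2 * n + 1) = 1 + t n) :
    (X : PowerSeries (ZMod 2)) =
      PowerSeries.mk t + X ^ 2 * PowerSeries.mk t + (PowerSeries.mk t) ^ 2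
        + X ^ 1 * (PowerSeries.mk t) ^ 2 + X ^ 2 * (PowerSeries.mk t) ^ 2
        + X ^ 3 * (PowerSeries.mk t) ^ 2 := by
  have q_even : ∀ m, coeff (2 * m) ((PowerSeries.mk t) ^ 2) = t m := by
    intro m; rw [coeff_sq_even, coeff_mk]
  have q_odd : ∀ m, coeff (2 * m + 1) ((PowerSeries.mk t) ^ 2) = 0 :=
    fun m => coeff_sq_odd _ m
  apply PowerSeries.ext; intro k
  simp only [map_add, coeff_X, coeff_mk, coeff_X_pow_mul']
  rcases k with _ | _ | n
  · -- k = 0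
    have e0 : coeff 0 ((PowerSeries.mk t) ^ 2) = t 0 := by simpa using q_even 0
    norm_num [e0, h0]
  · -- k = 1
    have e1 : coeff 1 ((PowerSeries.mk t) ^ 2) = 0 := by simpa using q_odd 0
    have e0 : coeff 0 ((PowerSeries.mk t) ^ 2) = t 0 := by simpa using q_even 0
    have ht1 : t 1 = 1 + t 0 := by simpa using ho 0
    norm_num [e0, e1, ht1, h0]
  · rcases Nat.even_or_odd' n with ⟨m, hm | hm⟩ <;> subst hm
    · -- k = 2m + 2
      have h1 : (2 * m + 2 : ℕ) ≠ 1 := by omega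
      have h2 : (2 : ℕ) ≤ 2 * m + 2 := by omega
      have h3 : (1 : ℕ) ≤ 2 * m + 2 := by omega
      rw [if_neg h1, if_pos h2, if_pos h2, if_pos h3]
      have hlast : (if 3 ≤ 2 * m + 2 then
          coeff (2 * m + 2 - 3) ((PowerSeries.mk t) ^ 2) else 0) = 0 := by
        rcases m with _ | m'
        · rw [if_neg (by omega)]
        · rw [if_pos (by omega), show 2 * (m' + 1) + 2 - 3 = 2 * m' + 1 from by omega, q_odd]
      rw [hlast]
      rw [show 2 * m + 2 - 2 = 2 * m from by omega,
          show 2 * m + 2 - 1 = 2 * m + 1 from by omega]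
      rw [show (2 * m + 2 : ℕ) = 2 * (m + 1) from by ring]
      rw [q_even, q_odd, q_even, he, he]
      linear_combination (-(t (m + 1) + t m)) * PTMInv.two_z
    · -- k = 2m + 3
      have h1 : (2 * m + 3 : ℕ) ≠ 1 := by omega
      have h2 : (2 : ℕ) ≤ 2 * m + 3 := by omega
      have h3 : (1 : ℕ) ≤ 2 * m + 3 := by omega
      have h4 : (3 : ℕ) ≤ 2 * m + 3 := by omega
      rw [if_neg h1, if_pos h2, if_pos h2, if_pos h3, if_pos h4]
      rw [show 2 * m + 3 - 2 = 2 * m + 1 from by omega,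
          show 2 * m + 3 - 1 = 2 * (m + 1) from by omega,
          show 2 * m + 3 - 3 = 2 * m from by omega]
      rw [show (2 * m + 3 : ℕ) = 2 * (m + 1) + 1 from by ring]
      rw [q_odd, q_even, q_odd, q_even, ho, ho]
      linear_combination (-(1 + t (m + 1) + t m)) * PTMInv.two_z

end Main

/-- The coefficients `cₙ` of the compositional inverse `G` of the
Prouhet–Thue–Morse series over `𝔽₂` satisfy `c₀ = 0`, `c₁ = c₂ = 1`, `c₃ = 0`,
and for `n ≥ 1`: `c_{4n} = c_{4n+1} = c_{4n+2} = c_{4n-1}` and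
`c_{4n+3} = c_{4n-1} + cₙ`. -/
theorem inverse_ptm_coeff_recurrence (t : ℕ → ZMod 2) (h0 : t 0 = 0)
    (he : ∀ n, t (2 * n) = t n) (ho : ∀ n, t (2 * n + 1) = 1 + t n)
    (G : PowerSeries (ZMod 2)) (hG0 : constantCoeff G = 0)
    (hFG : ∀ k : ℕ, coeff k
      (∑ n ∈ Finset.range (k + 1), PowerSeries.C (t n) * G ^ n) =
      coeff k X)
    (hGF : ∀ k : ℕ, coeff k
      (∑ n ∈ Finset.range (k + 1),
        PowerSeries.C (coeff n G) * (PowerSeries.mk t) ^ n) =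
      coeff k X)
    (c : ℕ → ZMod 2) (hc : ∀ n, c n = coeff n G) :
    c 0 = 0 ∧ c 1 = 1 ∧ c 2 = 1 ∧ c 3 = 0 ∧
    ∀ n : ℕ, 1 ≤ n →
      c (4 * n) = c (4 * n - 1) ∧
      c (4 * n + 1) = c (4 * n - 1) ∧
      c (4 * n + 2) = c (4 * n - 1) ∧
      c (4 * n + 3) = c (4 * n - 1) + c n := by
  have htwo : (2 : PowerSeries (ZMod 2)) = 0 := by
    have : (2 : PowerSeries (ZMod 2)) = PowerSeries.C 2 := (map_ofNat _ 2).symm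
    rw [this, show (2 : ZMod 2) = 0 from PTMInv.two_z, map_zero]
  -- substitution of the Thue–Morse series
  have hSF : PTMInv.S G (PowerSeries.mk t) = X := by
    apply PowerSeries.ext; intro k
    rw [PTMInv.S_coeff, ← hFG k, map_sum]
    exact Finset.sum_congr rfl fun n _ => by rw [coeff_C_mul, coeff_mk]
  -- the functional equation for G
  have hIF := ptm_identity t h0 he ho
  have hEQ := congrArg (PTMInv.S G) hIF
  simp only [PTMInv.S_add G, PTMInv.S_mul G hG0, PTMInv.S_pow G hG0, PTMInv.S_X G hG0,
    hSF, pow_one] at hEQ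
  -- the key equation `(1+X)(1+G) = 1 + X^3 (1+G)^4`
  have hP' : (1 + G) + X * (1 + G) = 1 + X ^ 3 * (1 + G) ^ 4 := by
    linear_combination (1 + X * (1 + G)) * hEQ +
      (X + X ^ 2 + X ^ 2 * G + X ^ 2 * G ^ 2 + X ^ 2 * G ^ 3 - X ^ 3 * G
        - 2 * X ^ 3 * G ^ 2 - X ^ 3 * G ^ 3) * htwo
  have hB : ((1 : PowerSeries (ZMod 2)) + G) ^ 4 = (((1 + G) ^ 2) ^ 2) := by ring
  -- coefficient extraction
  have hH' : ∀ k : ℕ, k ≠ 0 → coeff k ((1 : PowerSeries (ZMod 2)) + G) = c k := by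
    intro k hk
    rw [map_add, coeff_one, if_neg hk, zero_add, hc]
  have hH0 : coeff 0 ((1 : PowerSeries (ZMod 2)) + G) = 1 := by
    rw [map_add, coeff_one, if_pos rfl, coeff_zero_eq_constantCoeff, hG0, add_zero]
  have hstep : ∀ k : ℕ, coeff (k + 1) G
      + coeff k ((1 : PowerSeries (ZMod 2)) + G)
      = coeff (k + 1) (X ^ 3 * (1 + G) ^ 4) := by
    intro k
    have h := congrArg (coeff (k + 1)) hP'
    rw [map_add, map_add, map_add, coeff_succ_X_mul, coeff_one,
      if_neg (Nat.succ_ne_zero k), zero_add, zero_add] at h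
    exact h
  have hc0 : c 0 = 0 := by rw [hc, coeff_zero_eq_constantCoeff, hG0]
  have e1 := hstep 0
  rw [coeff_X_pow_mul', if_neg (by omega), ← hc 1, hH0] at e1
  have hc1 : c 1 = 1 := by linear_combination e1 - PTMInv.two_z
  have e2 := hstep 1
  rw [coeff_X_pow_mul', if_neg (by omega), ← hc 2, hH' 1 (by omega)] at e2
  have hc2 : c 2 = 1 := by linear_combination e2 - hc1 - PTMInv.two_z
  have e3 := hstep 2
  rw [coeff_X_pow_mul', if_pos (by omega), ← hc 3, hH' 2 (by omega)] at e3
  have h40 : coeff (3 - 3) (((1 : PowerSeries (ZMod 2)) + G) ^ 4) = 1 := by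
    rw [show (3 - 3 : ℕ) = 2 * (2 * 0) from by omega, hB, PTMInv.coeff_sq_even, PTMInv.coeff_sq_even, hH0]
  rw [h40] at e3
  have hc3 : c 3 = 0 := by linear_combination e3 - hc2
  refine ⟨hc0, hc1, hc2, hc3, ?_⟩
  intro n hn
  obtain ⟨m, rfl⟩ : ∃ m, n = m + 1 := ⟨n - 1, by omega⟩
  have g0 : 4 * (m + 1) = 4 * m + 4 := by ring
  have g1 : 4 * (m + 1) - 1 = 4 * m + 3 := by omega
  have g2 : 4 * (m + 1) + 1 = 4 * m + 5 := by omega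
  have g3 : 4 * (m + 1) + 2 = 4 * m + 6 := by omega
  have g4 : 4 * (m + 1) + 3 = 4 * m + 7 := by omega
  rw [g4, g3, g2, g1, g0]
  -- step a : c(4m+4) = c(4m+3)
  have ea := hstep (4 * m + 3)
  rw [show 4 * m + 3 + 1 = 4 * m + 4 from by omega] at ea
  rw [coeff_X_pow_mul', if_pos (by omega),
    show 4 * m + 4 - 3 = 2 * (2 * m) + 1 from by omega, hB, PTMInv.coeff_sq_odd,
    ← hc (4 * m + 4), hH' (4 * m + 3) (by omega)] at ea
  have hA : c (4 * m + 4) = c (4 * m + 3) := by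
    linear_combination ea - c (4 * m + 3) * PTMInv.two_z
  -- step b : c(4m+5) = c(4m+3)
  have eb := hstep (4 * m + 4)
  rw [show 4 * m + 4 + 1 = 4 * m + 5 from by omega] at eb
  rw [coeff_X_pow_mul', if_pos (by omega),
    show 4 * m + 5 - 3 = 2 * (2 * m + 1) from by omega, hB, PTMInv.coeff_sq_even, PTMInv.coeff_sq_odd,
    ← hc (4 * m + 5), hH' (4 * m + 4) (by omega)] at eb
  have hBc : c (4 * m + 5) = c (4 * m + 3) := by
    linear_combination eb + hA - c (4 * m + 4) * PTMInv.two_z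
  -- step c : c(4m+6) = c(4m+3)
  have ec := hstep (4 * m + 5)
  rw [show 4 * m + 5 + 1 = 4 * m + 6 from by omega] at ec
  rw [coeff_X_pow_mul', if_pos (by omega),
    show 4 * m + 6 - 3 = 2 * (2 * m + 1) + 1 from by omega, hB, PTMInv.coeff_sq_odd,
    ← hc (4 * m + 6), hH' (4 * m + 5) (by omega)] at ec
  have hCc : c (4 * m + 6) = c (4 * m + 3) := by
    linear_combination ec + hBc - c (4 * m + 5) * PTMInv.two_z
  -- step d : c(4m+7) = c(4m+3) + c(m+1)
  have ed := hstep (4 * m + 6)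
  rw [show 4 * m + 6 + 1 = 4 * m + 7 from by omega] at ed
  rw [coeff_X_pow_mul', if_pos (by omega),
    show 4 * m + 7 - 3 = 2 * (2 * (m + 1)) from by omega, hB, PTMInv.coeff_sq_even, PTMInv.coeff_sq_even,
    ← hc (4 * m + 7), hH' (4 * m + 6) (by omega), hH' (m + 1) (by omega)] at ed
  have hDc : c (4 * m + 7) = c (4 * m + 3) + c (m + 1) := by
    linear_combination ed + hCc - c (4 * m + 6) * PTMInv.two_z
  exact ⟨hA, hBc, hCc, hDc⟩
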